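/- Let H be a real inner product space, let K : M × M → ℝ satisfy K(x,y) = ⟨Φ(x), Φ(y)⟩ for a map Φ : M → H. Then for any points x, x₁, …, xₙ ∈ M such that the Gram matrix K_{n,n} = (K(x_i,x_j))_{1≤i,j≤n} is invertible, the squared distance from Φ(x) to the span of Φ(x₁), …, Φ(xₙ) equals K(x,x) - k_n(x)ᵀ K_{n,n}⁻¹ k_n(x), where k_n(x) = (K(x,x₁), …, K(x,xₙ))ᵀ. -/

import Mathlib

open Matrix
open scoped RealInnerProductSpace

/-- The squared distance from a feature vector `Φ x` to the span of the feature vectors at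
the design points equals `K(x,x) - kₙ(x)ᵀ Kₙₙ⁻¹ kₙ(x)`. -/
theorem stmt_2 {H : Type*} [NormedAddCommGroup H] [InnerProductSpace ℝ H]
    {M : Type*} (Φ : M → H) (K : M → M → ℝ) (hK : ∀ x y, K x y = ⟪Φ x, Φ y⟫)
    {n : ℕ} (x : M) (X : Fin n → M)
    (G : Matrix (Fin n) (Fin n) ℝ) (hG : ∀ i j, G i j = K (X i) (X j))
    (hGinv : IsUnit G) :
    (Metric.infDist (Φ x)
        (Submodule.span ℝ (Set.range fun i => Φ (X i)) : Set H)) ^ 2 =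
      K x x - (fun i => K x (X i)) ⬝ᵥ (G⁻¹ *ᵥ fun i => K x (X i)) := by
  set k : Fin n → ℝ := fun i => K x (X i) with hk
  set c : Fin n → ℝ := G⁻¹ *ᵥ k with hc
  set v : H := ∑ i, c i • Φ (X i) with hv
  set V : Submodule ℝ H := Submodule.span ℝ (Set.range fun i => Φ (X i)) with hV
  have hvV : v ∈ V := Submodule.sum_mem _ fun i _ =>
    Submodule.smul_mem _ _ (Submodule.subset_span ⟨i, rfl⟩)
  have hGc : G *ᵥ c = k := by
    rw [hc, Matrix.mulVec_mulVec, Matrix.mul_nonsing_inv _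
      ((Matrix.isUnit_iff_isUnit_det G).mp hGinv), Matrix.one_mulVec]
  -- orthogonality on generators
  have hgen : ∀ j, ⟪Φ x - v, Φ (X j)⟫ = 0 := by
    intro j
    rw [inner_sub_left, hv, sum_inner]
    have h1 : ⟪Φ x, Φ (X j)⟫ = k j := (hK x (X j)).symm
    have h2 : ∀ i, ⟪c i • Φ (X i), Φ (X j)⟫ = G j i * c i := by
      intro i
      rw [real_inner_smul_left, ← hK, ← hG]
      have : G i j = G j i := by rw [hG, hG, hK, hK, real_inner_comm]
      rw [this]; ring
    simp only [h2, h1]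
    have : ∑ i, G j i * c i = (G *ᵥ c) j := rfl
    rw [this, hGc, sub_self]
  have horth : ∀ w ∈ V, ⟪Φ x - v, w⟫ = 0 := by
    intro w hw
    induction hw using Submodule.span_induction with
    | mem w hw => obtain ⟨j, rfl⟩ := hw; exact hgen j
    | zero => simp
    | add a b _ _ ha hb => rw [inner_add_right, ha, hb, add_zero]
    | smul r a _ ha => rw [real_inner_smul_right, ha, mul_zero]
  have hdist : Metric.infDist (Φ x) (V : Set H) = ‖Φ x - v‖ := by
    rw [Metric.infDist_eq_iInf]
    have := (Submodule.norm_eq_iInf_iff_real_inner_eq_zero V hvV (u := Φ x)).mpr horth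
    rw [this]
    congr 1
    ext w
    rw [dist_eq_norm]
  rw [hdist]
  have : ‖Φ x - v‖ ^ 2 = ⟪Φ x - v, Φ x - v⟫ := (real_inner_self_eq_norm_sq _).symm
  rw [this, inner_sub_right, horth v hvV, sub_zero, inner_sub_left, hv, sum_inner]
  have h3 : ∀ i, ⟪c i • Φ (X i), Φ x⟫ = k i * c i := by
    intro i
    rw [real_inner_smul_left, real_inner_comm, ← hK]
    ring
  simp only [h3, ← hK]
  rw [dotProduct]
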